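/- arXiv:1212.4600 — 4 statements merged into one kernel-verified Lean document; each statement's English description precedes it below -/
import Mathlib

section
/- Let F be an algebraically closed field of characteristic zero and n ≥ 2. Let p be a commutative polynomial in the n² entries of an n×n matrix. If for every X ∈ M_n(F) and every S ∈ GL_n(F) one has p(SXS⁻¹) = 0 if and only if p(X) = 0, then p is a matrix invariant: p(SXS⁻¹) = p(X) for every X ∈ M_n(F) and every S ∈ GL_n(F). -/
open Matrix

/-- Evaluation of a commutative polynomial in the `n²` matrix entries at a matrix. -/
noncomputable def evalMat {F : Type} [Field F] {n : ℕ}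
    (p : MvPolynomial (Fin n × Fin n) F) (X : Matrix (Fin n) (Fin n) F) : F :=
  MvPolynomial.eval (fun ij : Fin n × Fin n => X ij.1 ij.2) p

namespace ZeroSetConjAux

variable {F : Type} [Field F] [IsAlgClosed F] {n : ℕ}

/- ## Matrix identities: transvection algebra -/

lemma sbm_w_eq (i j : Fin n) (hij : i ≠ j) (a b : F) :
    transvection i j a * transvection j i b * transvection i j a =
      1 + single i j (2*a + a*b*a) + single j i b
        + single i i (a*b) + single j j (b*a) := by
  have h2 : (2*a + a*b*a) = a + (a + a*b*a) := by ring
  have h0 : single i j a * single i j a = (0 : Matrix (Fin n) (Fin n) F) :=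
    single_mul_single_of_ne (c := a) i j _ hij.symm a
  simp only [transvection, add_mul, mul_add, one_mul, mul_one,
    single_mul_single_same, single_mul_single_of_ne (h := hij),
    single_mul_single_of_ne (h := hij.symm), add_zero, zero_add, zero_mul, mul_zero,
    h2, single_add, h0]
  abel

lemma sbm_prod (i j : Fin n) (hij : i ≠ j) (a b c d a' b' c' d' : F) :
    (1 + single i j a + single j i b + single i i c + single j j d) *
    (1 + single i j a' + single j i b' + single i i c' + single j j d') =
    1 + single i j (a + a' + a*d' + c*a') + single j i (b + b' + b*c' + d*b')
      + single i i (c + c' + a*b' + c*c') + single j j (d + d' + b*a' + d*d') := by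
  have h0 : ∀ x y : F, single i j x * single i j y = (0 : Matrix (Fin n) (Fin n) F) :=
    fun x y => single_mul_single_of_ne (c := x) i j _ hij.symm y
  have h1 : ∀ x y : F, single j i x * single j i y = (0 : Matrix (Fin n) (Fin n) F) :=
    fun x y => single_mul_single_of_ne (c := x) j i _ hij y
  have h2 : ∀ x y : F, single i j x * single i i y = (0 : Matrix (Fin n) (Fin n) F) :=
    fun x y => single_mul_single_of_ne (c := x) i j _ hij.symm y
  have h3 : ∀ x y : F, single j i x * single j j y = (0 : Matrix (Fin n) (Fin n) F) :=
    fun x y => single_mul_single_of_ne (c := x) j i _ hij y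
  have h4 : ∀ x y : F, single i i x * single j i y = (0 : Matrix (Fin n) (Fin n) F) :=
    fun x y => single_mul_single_of_ne (c := x) i i _ hij y
  have h5 : ∀ x y : F, single i i x * single j j y = (0 : Matrix (Fin n) (Fin n) F) :=
    fun x y => single_mul_single_of_ne (c := x) i i _ hij y
  have h6 : ∀ x y : F, single j j x * single i j y = (0 : Matrix (Fin n) (Fin n) F) :=
    fun x y => single_mul_single_of_ne (c := x) j j _ hij.symm y
  have h7 : ∀ x y : F, single j j x * single i i y = (0 : Matrix (Fin n) (Fin n) F) :=
    fun x y => single_mul_single_of_ne (c := x) j j _ hij.symm y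
  simp only [add_mul, mul_add, one_mul, mul_one, single_mul_single_same,
    h0, h1, h2, h3, h4, h5, h6, h7, add_zero, zero_add, single_add]
  abel

lemma diag_sbm (i j : Fin n) (hij : i ≠ j) (a : F) :
    diagonal (fun k => if k = i then a else if k = j then a⁻¹ else 1) =
    (1 + single i i (a-1) + single j j (a⁻¹-1) : Matrix (Fin n) (Fin n) F) := by
  ext k l
  simp only [diagonal, single, Matrix.one_apply, of_apply, Matrix.add_apply]
  by_cases hkl : k = l <;> by_cases h1 : k = i <;> by_cases h2 : k = j <;>
    subst_eqs <;> split_ifs <;> subst_eqs <;> simp_all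

lemma delta_eq_transvections (i j : Fin n) (hij : i ≠ j) (a : F) (ha : a ≠ 0) :
    diagonal (fun k => if k = i then a else if k = j then a⁻¹ else 1) =
      transvection i j a * transvection j i (-a⁻¹) * transvection i j a *
        (transvection i j (-1) * transvection j i 1 * transvection i j (-1)) := by
  rw [sbm_w_eq i j hij a (-a⁻¹), sbm_w_eq i j hij (-1) 1, sbm_prod i j hij]
  rw [show (2 * a + a * -a⁻¹ * a + (2 * -1 + -1 * 1 * -1) + (2 * a + a * -a⁻¹ * a) * (1 * -1) +
                a * -a⁻¹ * (2 * -1 + -1 * 1 * -1)) = (0:F) by field_simp; try ring,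
      show (-a⁻¹ + 1 + -a⁻¹ * (-1 * 1) + -a⁻¹ * a * 1) = (0:F) by field_simp; try ring,
      show (a * -a⁻¹ + -1 * 1 + (2 * a + a * -a⁻¹ * a) * 1 + a * -a⁻¹ * (-1 * 1)) = (a - 1 : F) by
        field_simp; try ring,
      show (-a⁻¹ * a + 1 * -1 + -a⁻¹ * (2 * -1 + -1 * 1 * -1) + -a⁻¹ * a * (1 * -1)) = (a⁻¹ - 1 : F) by
        field_simp; try ring]
  simp only [single_zero, add_zero]
  exact diag_sbm i j hij a

/- ## Polynomial in the transvection parameter -/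

lemma map_transvection (i j : Fin n) (P : Polynomial F) (c : F) :
    (transvection i j P).map (Polynomial.evalRingHom c : Polynomial F →+* F) =
      transvection i j (P.eval c) := by
  ext k l
  rw [Matrix.map_apply]
  simp only [transvection, Matrix.add_apply, Matrix.one_apply, single, Matrix.of_apply]
  split_ifs <;> simp

noncomputable def tvPoly (p : MvPolynomial (Fin n × Fin n) F) (X : Matrix (Fin n) (Fin n) F)
    (i j : Fin n) : Polynomial F :=
  MvPolynomial.eval₂ Polynomial.C
    (fun kl : Fin n × Fin n =>
      ((transvection i j (Polynomial.X : Polynomial F) * X.map Polynomial.C *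
        transvection i j (-(Polynomial.X : Polynomial F))) : Matrix (Fin n) (Fin n) (Polynomial F))
        kl.1 kl.2) p

lemma tvPoly_eval (p : MvPolynomial (Fin n × Fin n) F) (X : Matrix (Fin n) (Fin n) F)
    (i j : Fin n) (c : F) :
    (tvPoly p X i j).eval c = evalMat p (transvection i j c * X * transvection i j (-c)) := by
  unfold tvPoly
  rw [show (Polynomial.eval c : Polynomial F → F) = (Polynomial.evalRingHom c : Polynomial F →+* F) from rfl]
  rw [MvPolynomial.eval₂_comp_left (Polynomial.evalRingHom c) Polynomial.C _ p]
  have hMap : ((transvection i j (Polynomial.X : Polynomial F) * X.map Polynomial.C *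
      transvection i j (-(Polynomial.X : Polynomial F))).map (Polynomial.evalRingHom c)) =
      transvection i j c * X * transvection i j (-c) := by
    rw [Matrix.map_mul, Matrix.map_mul, map_transvection, map_transvection]
    have : (X.map Polynomial.C).map (Polynomial.evalRingHom c) = X := by
      ext k l; simp
    rw [this]
    simp
  unfold evalMat
  rw [MvPolynomial.eval, ← hMap]
  congr 1
  ext x
  simp

/- ## Conjugation invariance predicate -/

variable (p : MvPolynomial (Fin n × Fin n) F)

def QInv (M : Matrix (Fin n) (Fin n) F) : Prop :=
  ∀ X : Matrix (Fin n) (Fin n) F, evalMat p X ≠ 0 →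
    evalMat p (M * X * M⁻¹) = evalMat p X

lemma QInv_mul {A B : Matrix (Fin n) (Fin n) F} (hA : QInv p A) (hB : QInv p B) :
    QInv p (A * B) := by
  intro X hX
  rw [Matrix.mul_inv_rev]
  have h1 : A * B * X * (B⁻¹ * A⁻¹) = A * (B * X * B⁻¹) * A⁻¹ := by
    simp only [Matrix.mul_assoc]
  rw [h1, hA _ (by rw [hB X hX]; exact hX), hB X hX]

lemma QInv_one : QInv p 1 := by
  intro X hX
  simp

lemma QInv_smul_one (c : F) (hc : c ≠ 0) : QInv p (c • (1 : Matrix (Fin n) (Fin n) F)) := by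
  intro X hX
  have hinv : (c • (1 : Matrix (Fin n) (Fin n) F))⁻¹ = c⁻¹ • 1 := by
    apply Matrix.inv_eq_right_inv
    rw [smul_mul_smul_comm, mul_inv_cancel₀ hc, one_mul, one_smul]
  rw [hinv, smul_mul_assoc, Matrix.mul_smul, Matrix.one_mul, Matrix.mul_one, smul_smul,
    inv_mul_cancel₀ hc, one_smul]

lemma transvection_mul_neg (i j : Fin n) (hij : i ≠ j) (c : F) :
    transvection i j c * transvection i j (-c) = 1 := by
  rw [transvection_mul_transvection_same i j hij, add_neg_cancel, transvection_zero]

lemma QInv_transvection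
    (hz : ∀ (X : Matrix (Fin n) (Fin n) F) (S : (Matrix (Fin n) (Fin n) F)ˣ),
      evalMat p ((S : Matrix (Fin n) (Fin n) F) * X *
        ((S⁻¹ : (Matrix (Fin n) (Fin n) F)ˣ) : Matrix (Fin n) (Fin n) F)) = 0 ↔
      evalMat p X = 0)
    (i j : Fin n) (hij : i ≠ j) (c : F) : QInv p (transvection i j c) := by
  intro X hX
  have hTinv : (transvection i j c)⁻¹ = transvection i j (-c) :=
    Matrix.inv_eq_right_inv (transvection_mul_neg i j hij c)
  rw [hTinv]
  -- the polynomial `q` in the transvection parameter never vanishes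
  have hnv : ∀ d : F, evalMat p (transvection i j d * X * transvection i j (-d)) ≠ 0 := by
    intro d hzero
    refine hX ?_
    have h1 : transvection i j d * transvection i j (-d) = 1 := transvection_mul_neg i j hij d
    have h2 : transvection i j (-d) * transvection i j d = 1 := by
      rw [transvection_mul_transvection_same i j hij, neg_add_cancel, transvection_zero]
    exact (hz X ⟨transvection i j d, transvection i j (-d), h1, h2⟩).mp hzero
  set q := tvPoly p X i j with hq
  have hqe : ∀ d : F, q.eval d ≠ 0 := by
    intro d
    rw [hq, tvPoly_eval]
    exact hnv d
  have hq0 : q.eval 0 = evalMat p X := by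
    rw [hq, tvPoly_eval]
    simp [transvection_zero]
  have hdeg : q.degree ≤ 0 := by
    by_contra hd
    obtain ⟨z, hzr⟩ := IsAlgClosed.exists_root q (by
      intro h0
      rw [h0] at hd
      exact hd le_rfl)
    exact hqe z hzr
  have hconst : q = Polynomial.C (q.coeff 0) := Polynomial.eq_C_of_degree_le_zero hdeg
  have : q.eval c = q.eval 0 := by rw [hconst]; simp
  rw [← tvPoly_eval p X i j c, ← hq, this, hq0]

lemma QInv_delta
    (hz : ∀ (X : Matrix (Fin n) (Fin n) F) (S : (Matrix (Fin n) (Fin n) F)ˣ),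
      evalMat p ((S : Matrix (Fin n) (Fin n) F) * X *
        ((S⁻¹ : (Matrix (Fin n) (Fin n) F)ˣ) : Matrix (Fin n) (Fin n) F)) = 0 ↔
      evalMat p X = 0)
    (i j : Fin n) (hij : i ≠ j) (a : F) (ha : a ≠ 0) :
    QInv p (diagonal (fun k => if k = i then a else if k = j then a⁻¹ else 1)) := by
  rw [delta_eq_transvections i j hij a ha]
  exact QInv_mul p
    (QInv_mul p (QInv_mul p (QInv_transvection p hz i j hij a)
      (QInv_transvection p hz j i hij.symm (-a⁻¹))) (QInv_transvection p hz i j hij a))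
    (QInv_mul p (QInv_mul p (QInv_transvection p hz i j hij (-1))
      (QInv_transvection p hz j i hij.symm 1)) (QInv_transvection p hz i j hij (-1)))

lemma QInv_diag_det_one
    (hz : ∀ (X : Matrix (Fin n) (Fin n) F) (S : (Matrix (Fin n) (Fin n) F)ˣ),
      evalMat p ((S : Matrix (Fin n) (Fin n) F) * X *
        ((S⁻¹ : (Matrix (Fin n) (Fin n) F)ˣ) : Matrix (Fin n) (Fin n) F)) = 0 ↔
      evalMat p X = 0)
    (hn : 0 < n) :
    ∀ (m : ℕ) (e : Fin n → F), (∀ i, e i ≠ 0) → (∏ i, e i = 1) →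
      (∀ i : Fin n, m ≤ (i : ℕ) → e i = 1) → QInv p (diagonal e) := by
  intro m
  induction m with
  | zero =>
    intro e _ _ hsupp
    have he1 : e = fun _ => 1 := funext fun i => hsupp i (Nat.zero_le _)
    rw [he1]
    rw [Matrix.diagonal_one]
    exact QInv_one p
  | succ m ih =>
    intro e he hprod hsupp
    by_cases hmn : m < n
    swap
    · exact ih e he hprod
        (fun i hi => absurd (lt_of_lt_of_le i.isLt (not_lt.mp hmn)) (not_lt.mpr hi))
    by_cases hm0 : m = 0
    · subst hm0
      have hall : ∀ i : Fin n, i ≠ ⟨0, hn⟩ → e i = 1 := by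
        intro i hi
        refine hsupp i ?_
        have : (i : ℕ) ≠ 0 := by
          intro h0
          exact hi (Fin.ext h0)
        omega
      have h0 : e ⟨0, hn⟩ = 1 := by
        have := Finset.prod_eq_single (M := F) (f := e) ⟨0, hn⟩
          (fun b _ hb => hall b hb) (fun habs => absurd (Finset.mem_univ _) habs)
        rw [← this, hprod]
      have he1 : e = fun _ => 1 := by
        funext i
        by_cases hi : i = ⟨0, hn⟩
        · rw [hi]; exact h0
        · exact hall i hi
      rw [he1]
      rw [Matrix.diagonal_one]
      exact QInv_one p
    · have hm1 : 1 ≤ m := by omega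
      set i₀ : Fin n := ⟨m - 1, by omega⟩ with hi₀
      set j₀ : Fin n := ⟨m, hmn⟩ with hj₀
      have hij : i₀ ≠ j₀ := by
        simp only [hi₀, hj₀, Fin.ne_iff_vne]
        omega
      set a : F := (e j₀)⁻¹ with hadef
      have ha : a ≠ 0 := inv_ne_zero (he j₀)
      set e' : Fin n → F := Function.update (Function.update e i₀ (e i₀ * e j₀)) j₀ 1 with he'def
      have he'eq : ∀ k, e' k = if k = i₀ then e i₀ * e j₀ else if k = j₀ then 1 else e k := by
        intro k
        rw [he'def]
        rcases eq_or_ne k j₀ with rfl | hk2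
        · rw [Function.update_self, if_neg hij.symm, if_pos rfl]
        · rw [Function.update_of_ne hk2]
          rcases eq_or_ne k i₀ with rfl | hk1
          · rw [Function.update_self, if_pos rfl]
          · rw [Function.update_of_ne hk1, if_neg hk1, if_neg hk2]
      have hdecomp : diagonal e = diagonal e' *
          diagonal (fun k => if k = i₀ then a else if k = j₀ then a⁻¹ else 1) := by
        rw [Matrix.diagonal_mul_diagonal]
        refine congrArg diagonal (funext fun k => ?_)
        show e k = e' k * (if k = i₀ then a else if k = j₀ then a⁻¹ else 1)
        rw [he'eq k]
        rcases eq_or_ne k i₀ with rfl | hk1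
        · rw [if_pos rfl, if_pos rfl, hadef, mul_assoc, mul_inv_cancel₀ (he j₀), mul_one]
        · rw [if_neg hk1, if_neg hk1]
          rcases eq_or_ne k j₀ with rfl | hk2
          · rw [if_pos rfl, if_pos rfl, hadef, inv_inv, one_mul]
          · rw [if_neg hk2, if_neg hk2, mul_one]
      have he' : ∀ k, e' k ≠ 0 := by
        intro k
        rw [he'eq k]
        split_ifs
        · exact mul_ne_zero (he i₀) (he j₀)
        · exact one_ne_zero
        · exact he k
      have hprod' : ∏ k, e' k = 1 := by
        rw [he'def]
        rw [Finset.prod_update_of_mem (Finset.mem_univ j₀)]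
        have hi₀mem : i₀ ∈ Finset.univ \ {j₀} := by
          simp [hij]
        rw [Finset.prod_update_of_mem hi₀mem]
        have hsplit : (1 : F) = ∏ k, e k := hprod.symm
        rw [Finset.prod_eq_mul_prod_sdiff_singleton_of_mem (Finset.mem_univ j₀) e] at hsplit
        rw [Finset.prod_eq_mul_prod_sdiff_singleton_of_mem hi₀mem e] at hsplit
        rw [one_mul]
        rw [hsplit]
        ring
      have hsupp' : ∀ i : Fin n, m ≤ (i : ℕ) → e' i = 1 := by
        intro i hi
        rw [he'eq i]
        by_cases hk2 : i = j₀
        · simp [hk2, if_neg hij.symm]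
        · have hk1 : i ≠ i₀ := by
            intro h0
            rw [h0] at hi
            simp only [hi₀] at hi
            omega
          rw [if_neg hk1, if_neg hk2]
          refine hsupp i ?_
          have : (i : ℕ) ≠ m := by
            intro h0
            exact hk2 (Fin.ext h0)
          omega
      rw [hdecomp]
      exact QInv_mul p (ih e' he' hprod' hsupp') (QInv_delta p hz i₀ j₀ hij a ha)

lemma QInv_diagonal
    (hz : ∀ (X : Matrix (Fin n) (Fin n) F) (S : (Matrix (Fin n) (Fin n) F)ˣ),
      evalMat p ((S : Matrix (Fin n) (Fin n) F) * X *
        ((S⁻¹ : (Matrix (Fin n) (Fin n) F)ˣ) : Matrix (Fin n) (Fin n) F)) = 0 ↔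
      evalMat p X = 0)
    (hn : 0 < n) (D : Fin n → F) (hD : det (diagonal D) ≠ 0) :
    QInv p (diagonal D) := by
  rw [Matrix.det_diagonal] at hD
  have hDi : ∀ i, D i ≠ 0 := fun i hi =>
    hD (Finset.prod_eq_zero (Finset.mem_univ i) hi)
  obtain ⟨c, hc⟩ := IsAlgClosed.exists_pow_nat_eq (∏ i, D i) hn
  have hc0 : c ≠ 0 := by
    intro h0
    rw [h0, zero_pow (by omega)] at hc
    exact hD hc.symm
  set e : Fin n → F := fun i => c⁻¹ * D i with hedef
  have hce : c • e = D := by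
    funext i
    rw [hedef]
    simp only [Pi.smul_apply, smul_eq_mul, ← mul_assoc, mul_inv_cancel₀ hc0, one_mul]
  have hdecomp : diagonal D = (c • (1 : Matrix (Fin n) (Fin n) F)) * diagonal e := by
    rw [smul_mul_assoc, Matrix.one_mul, ← Matrix.diagonal_smul, hce]
  rw [hdecomp]
  refine QInv_mul p (QInv_smul_one p c hc0) ?_
  refine QInv_diag_det_one p hz hn n e (fun i => mul_ne_zero (inv_ne_zero hc0) (hDi i)) ?_
    (fun i hi => absurd i.isLt (not_lt.mpr hi))
  rw [hedef]
  rw [Finset.prod_mul_distrib, Finset.prod_const, Finset.card_univ, Fintype.card_fin,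
    ← hc, inv_pow, inv_mul_cancel₀ (pow_ne_zero _ hc0)]

end ZeroSetConjAux

theorem zero_set_conj_iff_matrix_invariant (F : Type) [Field F] [IsAlgClosed F]
    [CharZero F] (n : ℕ) (hn : 2 ≤ n) (p : MvPolynomial (Fin n × Fin n) F)
    (h : ∀ (X : Matrix (Fin n) (Fin n) F) (S : (Matrix (Fin n) (Fin n) F)ˣ),
      evalMat p ((S : Matrix (Fin n) (Fin n) F) * X *
        ((S⁻¹ : (Matrix (Fin n) (Fin n) F)ˣ) : Matrix (Fin n) (Fin n) F)) = 0 ↔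
      evalMat p X = 0) :
    ∀ (X : Matrix (Fin n) (Fin n) F) (S : (Matrix (Fin n) (Fin n) F)ˣ),
      evalMat p ((S : Matrix (Fin n) (Fin n) F) * X *
        ((S⁻¹ : (Matrix (Fin n) (Fin n) F)ˣ) : Matrix (Fin n) (Fin n) F)) =
      evalMat p X := by
  intro X S
  by_cases hX : evalMat p X = 0
  · rw [hX]
    exact (h X S).mpr hX
  · have hdet : det (S : Matrix (Fin n) (Fin n) F) ≠ 0 :=
      ((Matrix.isUnit_iff_isUnit_det _).mp S.isUnit).ne_zero
    have hQ := Matrix.diagonal_transvection_induction_of_det_ne_zero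
      (ZeroSetConjAux.QInv p) (S : Matrix (Fin n) (Fin n) F) hdet
      (fun D hD => ZeroSetConjAux.QInv_diagonal p h (show 0 < n by omega) D hD)
      (fun t => ZeroSetConjAux.QInv_transvection p h t.i t.j t.hij t.c)
      (fun A B _ _ hA hB => ZeroSetConjAux.QInv_mul p hA hB)
    have := hQ X hX
    rwa [← Matrix.coe_units_inv] at this
end

section
/- Let F be an algebraically closed field of characteristic zero and n ≥ 2. Let Z be a proper subset of M_n(F) that is Zariski closed (i.e., Z is the common zero set of a family of commutative polynomials in the n² matrix entries) and closed under conjugation by GL_n(F). Then there exists a nonzero commutative polynomial g in n variables over F such that g(φ(X)) = 0 for every X ∈ Z, where φ : M_n(F) → F^n sends a matrix to the tuple (α_1,…,α_n) of coefficients of its characteristic polynomial x^n + α_1 x^{n-1} + ⋯ + α_n. -/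
open Matrix

/-- The map `φ : M_n(F) → F^n` sending a matrix to the coefficients `(α_1, …, α_n)` of its
characteristic polynomial `x^n + α_1 x^{n-1} + ⋯ + α_n`; so `α_{k+1}` is the coefficient
of `x^{n-(k+1)}`. -/
noncomputable def phiMap {F : Type} [Field F] {n : ℕ} (X : Matrix (Fin n) (Fin n) F) :
    Fin n → F :=
  fun k => X.charpoly.coeff (n - ((k : ℕ) + 1))

namespace PhiAux

variable {F : Type} [Field F] {n : ℕ}

/-- evaluation commutes with `aeval` substitution. -/
lemma eval_aeval {σ τ : Type} (x : τ → F) (f : σ → MvPolynomial τ F)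
    (p : MvPolynomial σ F) :
    MvPolynomial.eval x (MvPolynomial.aeval f p)
      = MvPolynomial.eval (fun i => MvPolynomial.eval x (f i)) p := by
  have h1 : MvPolynomial.aeval f p = MvPolynomial.bind₁ f p := rfl
  rw [h1]
  unfold MvPolynomial.eval
  rw [MvPolynomial.eval₂Hom_bind₁]

/-- aeval into the base field is eval. -/
lemma aeval_eq_eval {σ : Type} (x : σ → F) (p : MvPolynomial σ F) :
    MvPolynomial.aeval x p = MvPolynomial.eval x p := by
  rw [MvPolynomial.aeval_def, MvPolynomial.eval]; rw [Algebra.algebraMap_self]; rfl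

/-- A root of the characteristic polynomial admits an eigenvector. -/
lemma exists_eigenvec (M : Matrix (Fin n) (Fin n) F) (μ : F)
    (h : M.charpoly.IsRoot μ) : ∃ v : Fin n → F, v ≠ 0 ∧ M *ᵥ v = μ • v := by
  have hdet : (μ • (1 : Matrix (Fin n) (Fin n) F) - M).det = 0 := by
    have hmap : (charmatrix M).map (Polynomial.evalRingHom μ)
        = μ • (1 : Matrix (Fin n) (Fin n) F) - M := by
      ext i j
      by_cases hij : i = j
      · subst hij; simp [charmatrix_apply_eq]
      · simp [charmatrix_apply_ne _ _ _ hij, Matrix.one_apply_ne hij]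
    have hdet2 := (RingHom.map_det (Polynomial.evalRingHom μ) (charmatrix M)).symm
    rw [RingHom.mapMatrix_apply, hmap] at hdet2
    rw [hdet2]
    simpa [Matrix.charpoly] using h
  obtain ⟨v, hv0, hv⟩ := (Matrix.exists_mulVec_eq_zero_iff).mpr hdet
  refine ⟨v, hv0, ?_⟩
  have : μ • v - M *ᵥ v = 0 := by
    rw [← hv, Matrix.sub_mulVec, Matrix.smul_mulVec, Matrix.one_mulVec]
  have := sub_eq_zero.mp this
  exact this.symm

/-- A matrix whose charpoly splits with pairwise distinct roots is conjugate to
the diagonal matrix of those roots. -/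
lemma diag_conj (M : Matrix (Fin n) (Fin n) F) (lam : Fin n → F)
    (hinj : Function.Injective lam)
    (h : M.charpoly = ∏ i, (Polynomial.X - Polynomial.C (lam i))) :
    ∃ u : (Matrix (Fin n) (Fin n) F)ˣ, M * (u : Matrix (Fin n) (Fin n) F)
      = (u : Matrix (Fin n) (Fin n) F) * Matrix.diagonal lam := by
  have hroot : ∀ i, M.charpoly.IsRoot (lam i) := by
    intro i
    rw [h, Polynomial.IsRoot, Polynomial.eval_prod]
    exact Finset.prod_eq_zero (Finset.mem_univ i) (by simp)
  choose v hv0 hveq using fun i => exists_eigenvec M (lam i) (hroot i)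
  have hli : LinearIndependent F v := by
    apply Module.End.eigenvectors_linearIndependent' (Matrix.mulVecLin M) lam hinj v
    intro i
    refine ⟨?_, hv0 i⟩
    rw [Module.End.mem_eigenspace_iff]
    simpa [Matrix.mulVecLin_apply] using hveq i
  set B : Matrix (Fin n) (Fin n) F := Matrix.of fun i j => v j i with hB
  have hBu : IsUnit B := by
    rw [← Matrix.linearIndependent_cols_iff_isUnit]
    have : (fun j => Bᵀ j) = v := by
      funext j; ext i; rfl
    show LinearIndependent F (fun j => Bᵀ j); rw [this]; exact hli
  refine ⟨hBu.unit, ?_⟩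
  have hmain : M * B = B * Matrix.diagonal lam := by
    ext i j
    rw [Matrix.mul_diagonal]
    have : (M * B) i j = (M *ᵥ v j) i := by
      simp [Matrix.mul_apply, Matrix.mulVec, dotProduct, hB]
    rw [this, hveq j]
    simp [hB, mul_comm]
  rwa [IsUnit.unit_spec]

/-- Over an algebraically closed field the charpoly factors. -/
lemma exists_roots [IsAlgClosed F] (M : Matrix (Fin n) (Fin n) F) :
    ∃ lam : Fin n → F, M.charpoly = ∏ i, (Polynomial.X - Polynomial.C (lam i)) := by
  have hm := M.charpoly_monic
  have hsp : M.charpoly.Splits := IsAlgClosed.splits _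
  have hdeg : M.charpoly.natDegree = n := by
    rw [Matrix.charpoly_natDegree_eq_dim, Fintype.card_fin]
  have hcard : Multiset.card M.charpoly.roots = n := by
    have := Polynomial.splits_iff_card_roots.mp hsp
    rw [hdeg] at this; exact this
  set l := M.charpoly.roots.toList with hl
  have hlen : l.length = n := by rw [hl, Multiset.length_toList, hcard]
  refine ⟨fun i => l.get (Fin.cast hlen.symm i), ?_⟩
  rw [hsp.eq_prod_roots_of_monic hm]
  rw [← Multiset.coe_toList M.charpoly.roots, ← hl, Multiset.map_coe, Multiset.prod_coe]
  have h1 : l.map (fun a => Polynomial.X - Polynomial.C a)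
      = List.ofFn (fun i : Fin l.length => Polynomial.X - Polynomial.C (l.get i)) := by
    conv_lhs => rw [← List.ofFn_get l]
    rw [List.map_ofFn]
    rfl
  rw [h1, List.prod_ofFn]
  exact (Equiv.prod_comp (finCongr hlen.symm)
    (fun i : Fin l.length => Polynomial.X - Polynomial.C (l.get i))).symm

/-- Vieta: signed coefficients are elementary symmetric functions of the roots. -/
lemma vieta (lam : Fin n → F) (k : Fin n) :
    ((-1 : F) ^ ((k : ℕ) + 1))
      * (∏ i, (Polynomial.X - Polynomial.C (lam i))).coeff (n - ((k : ℕ) + 1))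
      = MvPolynomial.eval lam (MvPolynomial.esymm (Fin n) F ((k : ℕ) + 1)) := by
  have hk1 : (k : ℕ) + 1 ≤ n := k.2
  have hcard : Multiset.card (Finset.univ.val.map lam) = n := by
    simp
  have hprod : ∏ i, (Polynomial.X - Polynomial.C (lam i))
      = ((Finset.univ.val.map lam).map (fun t => Polynomial.X - Polynomial.C t)).prod := by
    rw [Finset.prod_eq_multiset_prod, Multiset.map_map]
    rfl
  rw [hprod, Multiset.prod_X_sub_C_coeff _ (by rw [hcard]; exact Nat.sub_le n _)]
  rw [hcard, Nat.sub_sub_self hk1]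
  rw [← mul_assoc, ← pow_add, Even.neg_one_pow ⟨(k : ℕ) + 1, by ring⟩, one_mul]
  have ha := MvPolynomial.aeval_esymm_eq_multiset_esymm (σ := Fin n) (R := F) (S := F)
    ((k : ℕ) + 1) lam
  rw [aeval_eq_eval] at ha
  rw [← ha]



variable {F : Type} [Field F] {n : ℕ}

/-- Restriction of a polynomial in matrix entries to diagonal matrices. -/
noncomputable def qDiag (q : MvPolynomial (Fin n × Fin n) F) : MvPolynomial (Fin n) F :=
  MvPolynomial.aeval
    (fun ij : Fin n × Fin n => if ij.1 = ij.2 then MvPolynomial.X ij.1 else 0) q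

lemma eval_qDiag (q : MvPolynomial (Fin n × Fin n) F) (μ : Fin n → F) :
    MvPolynomial.eval μ (qDiag q) = evalMat q (Matrix.diagonal μ) := by
  have hfun : (fun ij : Fin n × Fin n => MvPolynomial.eval μ
      (if ij.1 = ij.2 then MvPolynomial.X ij.1 else (0 : MvPolynomial (Fin n) F)))
      = fun ij : Fin n × Fin n => Matrix.diagonal μ ij.1 ij.2 := by
    funext ij
    by_cases h : ij.1 = ij.2 <;> simp [h, Matrix.diagonal_apply]
  rw [qDiag, eval_aeval, hfun]
  rfl

/-- The "pre-discriminant": the product of all differences of distinct variables. -/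
noncomputable def discP (F : Type) [Field F] (n : ℕ) : MvPolynomial (Fin n) F :=
  ∏ p ∈ Finset.univ.offDiag, (MvPolynomial.X p.1 - MvPolynomial.X p.2)

lemma eval_discP (lam : Fin n → F) :
    MvPolynomial.eval lam (discP F n) = ∏ p ∈ Finset.univ.offDiag, (lam p.1 - lam p.2) := by
  simp [discP]

lemma eval_discP_eq_zero {lam : Fin n → F} (h : ¬ Function.Injective lam) :
    MvPolynomial.eval lam (discP F n) = 0 := by
  obtain ⟨a, b, hab, hne⟩ := Function.not_injective_iff.mp h
  rw [eval_discP]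
  exact Finset.prod_eq_zero (i := (a, b)) (Finset.mem_offDiag.mpr
    ⟨Finset.mem_univ _, Finset.mem_univ _, hne⟩) (by rw [sub_eq_zero]; exact hab)

lemma discP_ne_zero : discP F n ≠ 0 := by
  rw [discP]
  rw [Finset.prod_ne_zero_iff]
  intro p hp h0
  have hne : p.1 ≠ p.2 := (Finset.mem_offDiag.mp hp).2.2
  have := congrArg (MvPolynomial.eval (fun k => if k = p.1 then (1 : F) else 0)) h0
  simp [hne, if_neg (Ne.symm hne)] at this

lemma discP_symm : (discP F n).IsSymmetric := by
  intro τ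
  rw [discP, map_prod]
  simp only [map_sub, MvPolynomial.rename_X]
  refine Finset.prod_nbij' (fun p => (τ p.1, τ p.2)) (fun p => (τ⁻¹ p.1, τ⁻¹ p.2))
    ?_ ?_ ?_ ?_ ?_
  · intro p hp
    simp only [Finset.mem_offDiag] at hp ⊢
    exact ⟨Finset.mem_univ _, Finset.mem_univ _, fun h => hp.2.2 (τ.injective h)⟩
  · intro p hp
    simp only [Finset.mem_offDiag] at hp ⊢
    exact ⟨Finset.mem_univ _, Finset.mem_univ _, fun h => hp.2.2 (τ⁻¹.injective h)⟩
  · intro p _; simp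
  · intro p _; simp
  · intro p _; rfl

/-- Symmetrization by taking product over all permutations. -/
noncomputable def prodPerm (q' : MvPolynomial (Fin n) F) : MvPolynomial (Fin n) F :=
  ∏ σ : Equiv.Perm (Fin n), MvPolynomial.rename σ q'

lemma prodPerm_symm (q' : MvPolynomial (Fin n) F) : (prodPerm q').IsSymmetric := by
  intro τ
  rw [prodPerm, map_prod]
  have h1 : ∀ σ : Equiv.Perm (Fin n),
      MvPolynomial.rename τ (MvPolynomial.rename σ q')
        = MvPolynomial.rename (⇑(τ * σ)) q' := by
    intro σ
    rw [MvPolynomial.rename_rename]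
    rfl
  simp only [h1]
  exact Equiv.prod_comp (Equiv.mulLeft τ)
    (fun σ : Equiv.Perm (Fin n) => MvPolynomial.rename (⇑σ) q')

lemma eval_prodPerm (q' : MvPolynomial (Fin n) F) (lam : Fin n → F) :
    MvPolynomial.eval lam (prodPerm q')
      = ∏ σ : Equiv.Perm (Fin n), MvPolynomial.eval (lam ∘ σ) q' := by
  simp [prodPerm, MvPolynomial.eval_rename]

lemma prodPerm_ne_zero {q' : MvPolynomial (Fin n) F} (h : q' ≠ 0) : prodPerm q' ≠ 0 := by
  rw [prodPerm, Finset.prod_ne_zero_iff]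
  intro σ _ h0
  apply h
  have := MvPolynomial.rename_injective (R := F) (⇑σ) σ.injective
  apply this
  rw [h0, map_zero]

/-- Fundamental theorem of symmetric polynomials, in the form we need. -/
lemma exists_G (H : MvPolynomial (Fin n) F) (hs : H.IsSymmetric) :
    ∃ G : MvPolynomial (Fin n) F,
      MvPolynomial.aeval (fun i : Fin n => MvPolynomial.esymm (Fin n) F (↑i + 1)) G = H := by
  have hmem : H ∈ MvPolynomial.symmetricSubalgebra (Fin n) F :=
    (MvPolynomial.mem_symmetricSubalgebra H).mpr hs
  obtain ⟨G, hG⟩ := MvPolynomial.esymmAlgHom_fin_surjective (R := F) (m := n) (n := n)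
    le_rfl ⟨H, hmem⟩
  refine ⟨G, ?_⟩
  have := congrArg Subtype.val hG
  rwa [MvPolynomial.esymmAlgHom_apply] at this

/-- The sign-twisted variables substitution. -/
noncomputable def sgn (F : Type) [Field F] (n : ℕ) : Fin n → MvPolynomial (Fin n) F :=
  fun k => ((-1 : F) ^ ((k : ℕ) + 1)) • MvPolynomial.X k

lemma sgn_invol (p : MvPolynomial (Fin n) F) :
    MvPolynomial.aeval (sgn F n) (MvPolynomial.aeval (sgn F n) p) = p := by
  have h1 : MvPolynomial.aeval (sgn F n) p = MvPolynomial.bind₁ (sgn F n) p := rfl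
  rw [h1, MvPolynomial.aeval_bind₁]
  have h2 : ∀ i : Fin n, MvPolynomial.aeval (sgn F n) (sgn F n i) = MvPolynomial.X i := by
    intro i
    rw [show sgn F n i = ((-1 : F) ^ ((i : ℕ) + 1)) • MvPolynomial.X i from rfl]
    rw [_root_.map_smul, MvPolynomial.aeval_X,
      show sgn F n i = ((-1 : F) ^ ((i : ℕ) + 1)) • MvPolynomial.X i from rfl]
    rw [smul_smul, ← pow_add, Even.neg_one_pow ⟨(i : ℕ) + 1, rfl⟩, one_smul]
  simp only [h2]
  exact MvPolynomial.aeval_X_left_apply p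

/-- Key evaluation: plugging the charpoly coefficients into the sign-twisted `G`
computes `G` at the elementary symmetric functions of the roots. -/
lemma eval_g (G : MvPolynomial (Fin n) F) (X : Matrix (Fin n) (Fin n) F) (lam : Fin n → F)
    (hchar : X.charpoly = ∏ i, (Polynomial.X - Polynomial.C (lam i))) :
    MvPolynomial.eval (phiMap X) (MvPolynomial.aeval (sgn F n) G)
      = MvPolynomial.eval lam
          (MvPolynomial.aeval (fun i : Fin n => MvPolynomial.esymm (Fin n) F (↑i + 1)) G) := by
  rw [eval_aeval, eval_aeval]
  have hfun : (fun k : Fin n => MvPolynomial.eval (phiMap X) (sgn F n k))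
      = fun k : Fin n =>
        MvPolynomial.eval lam (MvPolynomial.esymm (Fin n) F ((k : ℕ) + 1)) := by
    funext k
    rw [show sgn F n k = ((-1 : F) ^ ((k : ℕ) + 1)) • MvPolynomial.X k from rfl,
      MvPolynomial.smul_eval, MvPolynomial.eval_X]
    have hphi : phiMap X k = (∏ i, (Polynomial.X - Polynomial.C (lam i))).coeff
        (n - ((k : ℕ) + 1)) := by
      rw [phiMap, hchar]
    rw [hphi]
    exact vieta lam k
  rw [hfun]

/-- The generic matrix with polynomial entries. -/
noncomputable def genM (F : Type) [Field F] (n : ℕ) :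
    Matrix (Fin n) (Fin n) (MvPolynomial (Fin n × Fin n) F) :=
  Matrix.of fun i j => MvPolynomial.X (i, j)

/-- The charpoly coefficients of the generic matrix, as polynomials in the entries. -/
noncomputable def genCoeff (F : Type) [Field F] (n : ℕ) (k : Fin n) :
    MvPolynomial (Fin n × Fin n) F :=
  (genM F n).charpoly.coeff (n - ((k : ℕ) + 1))

lemma eval_genCoeff (X : Matrix (Fin n) (Fin n) F) (k : Fin n) :
    evalMat (genCoeff F n k) X = phiMap X k := by
  unfold evalMat genCoeff phiMap
  have hmap : (genM F n).map
      (MvPolynomial.eval (fun ij : Fin n × Fin n => X ij.1 ij.2)) = X := by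
    ext i j
    simp [genM]
  rw [← Polynomial.coeff_map, ← Matrix.charpoly_map, hmap]

end PhiAux

theorem phi_image_of_proper_closed_conj_invariant (F : Type) [Field F] [IsAlgClosed F]
    [CharZero F] (n : ℕ) (hn : 2 ≤ n) (Z : Set (Matrix (Fin n) (Fin n) F))
    (hZproper : Z ≠ Set.univ)
    (hZclosed : ∃ S : Set (MvPolynomial (Fin n × Fin n) F),
      Z = {X | ∀ q ∈ S, evalMat q X = 0})
    (hZconj : ∀ X ∈ Z, ∀ S : (Matrix (Fin n) (Fin n) F)ˣ,
      (S : Matrix (Fin n) (Fin n) F) * X *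
        ((S⁻¹ : (Matrix (Fin n) (Fin n) F)ˣ) : Matrix (Fin n) (Fin n) F) ∈ Z) :
    ∃ g : MvPolynomial (Fin n) F, g ≠ 0 ∧
      ∀ X ∈ Z, MvPolynomial.eval (phiMap X) g = 0 := by
  classical
  obtain ⟨S, hSZ⟩ := hZclosed
  by_cases hq : ∃ q₀ ∈ S, PhiAux.qDiag q₀ ≠ 0
  · -- main case : some defining polynomial does not vanish on all diagonal matrices
    obtain ⟨q₀, hq₀S, hq₀⟩ := hq
    set H : MvPolynomial (Fin n) F :=
      PhiAux.discP F n * PhiAux.prodPerm (PhiAux.qDiag q₀) with hH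
    have hHsym : H.IsSymmetric := by
      intro τ
      rw [hH, _root_.map_mul, PhiAux.discP_symm τ, PhiAux.prodPerm_symm _ τ]
    have hHne : H ≠ 0 :=
      mul_ne_zero PhiAux.discP_ne_zero (PhiAux.prodPerm_ne_zero hq₀)
    obtain ⟨G, hG⟩ := PhiAux.exists_G H hHsym
    refine ⟨MvPolynomial.aeval (PhiAux.sgn F n) G, ?_, ?_⟩
    · intro h0
      apply hHne
      have hG0 : G = 0 := by
        rw [← PhiAux.sgn_invol G, h0, map_zero]
      rw [← hG, hG0, map_zero]
    · intro X hX
      obtain ⟨lam, hchar⟩ := PhiAux.exists_roots X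
      rw [PhiAux.eval_g G X lam hchar, hG, hH, _root_.map_mul]
      by_cases hinj : Function.Injective lam
      · -- distinct eigenvalues : `X` is conjugate to `diagonal lam ∈ Z`
        obtain ⟨u, hu⟩ := PhiAux.diag_conj X lam hinj hchar
        have hd : Matrix.diagonal lam ∈ Z := by
          have hmem := hZconj X hX u⁻¹
          rw [inv_inv] at hmem
          have he : ((u⁻¹ : (Matrix (Fin n) (Fin n) F)ˣ) : Matrix (Fin n) (Fin n) F)
              * X * (u : Matrix (Fin n) (Fin n) F) = Matrix.diagonal lam := by
            rw [mul_assoc, hu, ← mul_assoc, u.inv_mul, one_mul]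
          rwa [he] at hmem
        have hq0 : evalMat q₀ (Matrix.diagonal lam) = 0 := by
          rw [hSZ] at hd
          exact hd q₀ hq₀S
        rw [PhiAux.eval_prodPerm]
        have h1 : MvPolynomial.eval (lam ∘ (1 : Equiv.Perm (Fin n))) (PhiAux.qDiag q₀) = 0 := by
          have : lam ∘ ⇑(1 : Equiv.Perm (Fin n)) = lam := rfl
          rw [this, PhiAux.eval_qDiag, hq0]
        rw [Finset.prod_eq_zero (Finset.mem_univ (1 : Equiv.Perm (Fin n))) h1, mul_zero]
      · rw [PhiAux.eval_discP_eq_zero hinj, zero_mul]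
  · -- degenerate case : all defining polynomials vanish on diagonal matrices; then `Z = univ`
    exfalso
    push_neg at hq
    apply hZproper
    have hdiagZ : ∀ μ : Fin n → F, Matrix.diagonal μ ∈ Z := by
      intro μ
      rw [hSZ]
      intro q hqS
      rw [← PhiAux.eval_qDiag, hq q hqS, map_zero]
    obtain ⟨Gd, hGd⟩ := PhiAux.exists_G (PhiAux.discP F n) PhiAux.discP_symm
    set dE : MvPolynomial (Fin n × Fin n) F :=
      MvPolynomial.aeval
        (fun k : Fin n => ((-1 : F) ^ ((k : ℕ) + 1)) • PhiAux.genCoeff F n k) Gd with hdEdef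
    have hdE : ∀ X : Matrix (Fin n) (Fin n) F, ∀ lam : Fin n → F,
        X.charpoly = ∏ i, (Polynomial.X - Polynomial.C (lam i)) →
        evalMat dE X = MvPolynomial.eval lam (PhiAux.discP F n) := by
      intro X lam hchar
      rw [hdEdef]
      unfold evalMat
      rw [PhiAux.eval_aeval]
      have hfun : (fun k : Fin n => MvPolynomial.eval (fun ij : Fin n × Fin n => X ij.1 ij.2)
          (((-1 : F) ^ ((k : ℕ) + 1)) • PhiAux.genCoeff F n k))
          = fun k : Fin n =>
            MvPolynomial.eval lam (MvPolynomial.esymm (Fin n) F ((k : ℕ) + 1)) := by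
        funext k
        rw [MvPolynomial.smul_eval]
        have := PhiAux.eval_genCoeff X k
        unfold evalMat at this
        rw [this]
        have hphi : phiMap X k = (∏ i, (Polynomial.X - Polynomial.C (lam i))).coeff
            (n - ((k : ℕ) + 1)) := by
          rw [phiMap, hchar]
        rw [hphi]
        exact PhiAux.vieta lam k
      rw [hfun, ← PhiAux.eval_aeval lam
        (fun i : Fin n => MvPolynomial.esymm (Fin n) F (↑i + 1)) Gd, hGd]
    have hdEne : dE ≠ 0 := by
      intro h0
      set X0 : Matrix (Fin n) (Fin n) F := Matrix.diagonal (fun i : Fin n => ((i : ℕ) : F))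
        with hX0
      have hchar0 : X0.charpoly = ∏ i : Fin n, (Polynomial.X - Polynomial.C ((↑(i : ℕ) : F))) := by
        rw [hX0, Matrix.charpoly_of_upperTriangular _ (Matrix.blockTriangular_diagonal _)]
        congr 1
        funext i
        rw [Matrix.diagonal_apply_eq]
      have h1 := hdE X0 (fun i : Fin n => ((i : ℕ) : F)) hchar0
      rw [h0] at h1
      have h2 : (0 : F) = MvPolynomial.eval (fun i : Fin n => ((i : ℕ) : F))
          (PhiAux.discP F n) := by
        rw [← h1]
        unfold evalMat
        rw [map_zero]
      rw [PhiAux.eval_discP] at h2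
      have h3 : ∏ p ∈ Finset.univ.offDiag,
          (((p.1 : Fin n) : ℕ) - ((p.2 : Fin n) : ℕ) : F) ≠ 0 := by
        rw [Finset.prod_ne_zero_iff]
        intro p hp
        have hne : p.1 ≠ p.2 := (Finset.mem_offDiag.mp hp).2.2
        rw [sub_ne_zero]
        intro hcast
        exact hne (Fin.val_injective (Nat.cast_injective hcast))
      exact h3 h2.symm
    have hzero : ∀ q ∈ S, ∀ X : Matrix (Fin n) (Fin n) F, evalMat q X = 0 := by
      intro q hqS X
      have hvan : ∀ Y : Matrix (Fin n) (Fin n) F, evalMat q Y * evalMat dE Y = 0 := by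
        intro Y
        obtain ⟨lam, hchar⟩ := PhiAux.exists_roots Y
        by_cases hinj : Function.Injective lam
        · obtain ⟨u, hu⟩ := PhiAux.diag_conj Y lam hinj hchar
          have hY : Y ∈ Z := by
            have hmem := hZconj _ (hdiagZ lam) u
            have he : (u : Matrix (Fin n) (Fin n) F) * Matrix.diagonal lam
                * ((u⁻¹ : (Matrix (Fin n) (Fin n) F)ˣ) : Matrix (Fin n) (Fin n) F) = Y := by
              rw [← hu, mul_assoc, u.mul_inv, mul_one]
            rwa [he] at hmem
          rw [hSZ] at hY
          rw [hY q hqS, zero_mul]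
        · rw [hdE Y lam hchar, PhiAux.eval_discP_eq_zero hinj, mul_zero]
      have hpoly : q * dE = 0 := by
        apply MvPolynomial.funext
        intro x
        have h4 := hvan (Matrix.of fun i j => x (i, j))
        have h5 : (fun ij : Fin n × Fin n =>
            (Matrix.of fun i j => x (i, j)) ij.1 ij.2) = x := by
          funext ij
          rfl
        unfold evalMat at h4
        rw [h5] at h4
        rw [map_zero, _root_.map_mul]
        exact h4
      rcases mul_eq_zero.mp hpoly with h | h
      · rw [evalMat, h, map_zero]
      · exact absurd h hdEne
    rw [hSZ]
    exact Set.eq_univ_iff_forall.mpr fun X q hqs => hzero q hqs X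
end

section
/- Let F be an algebraically closed field of characteristic zero, n ≥ 2, k ≥ 2, d ≥ 2, and let i_1, …, i_{k-1} ∈ {2, …, d}. Let f ∈ F⟨x_1,…,x_d⟩ be the right-normed Lie monomial f = [x_{i_1}, x_{i_2}, …, x_{i_{k-1}}, x_1] = [x_{i_1}, [x_{i_2}, [⋯, [x_{i_{k-1}}, x_1]⋯]]], where [a,b] = ab − ba. Then the image of f on M_n(F) equals M_n^0(F), the set of all trace-zero matrices in M_n(F). -/
open Matrix

/-- Evaluation of a noncommutative polynomial at a tuple of `n × n` matrices. -/
noncomputable def ncEval {F : Type} [Field F] {d n : ℕ} (f : FreeAlgebra F (Fin d))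
    (a : Fin d → Matrix (Fin n) (Fin n) F) : Matrix (Fin n) (Fin n) F :=
  FreeAlgebra.lift F a f

/-- The image of a noncommutative polynomial on `M_n(F)`. -/
noncomputable def ncImage {F : Type} [Field F] {d : ℕ} (n : ℕ) (f : FreeAlgebra F (Fin d)) :
    Set (Matrix (Fin n) (Fin n) F) :=
  Set.range fun a : Fin d → Matrix (Fin n) (Fin n) F => ncEval f a

/-- The commutator `[a, b] = ab - ba`. -/
def br {A : Type} [Ring A] (a b : A) : A := a * b - b * a



variable {F : Type} [Field F] {m : Type} [Fintype m] [DecidableEq m]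

/-- similarity: `Y = P⁻¹ X P` phrased with explicit two-sided inverse -/
def SimTo (X Y : Matrix m m F) : Prop :=
  ∃ P P' : Matrix m m F, P * P' = 1 ∧ P' * P = 1 ∧ Y = P' * X * P

lemma SimTo.refl (X : Matrix m m F) : SimTo X X :=
  ⟨1, 1, by simp, by simp, by simp⟩

lemma SimTo.trans {X Y Z : Matrix m m F} (h1 : SimTo X Y) (h2 : SimTo Y Z) : SimTo X Z := by
  obtain ⟨P, P', hPP', hP'P, rfl⟩ := h1
  obtain ⟨Q, Q', hQQ', hQ'Q, rfl⟩ := h2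
  refine ⟨P * Q, Q' * P', ?_, ?_, by noncomm_ring⟩
  · calc P * Q * (Q' * P') = P * (Q * Q') * P' := by noncomm_ring
    _ = 1 := by rw [hQQ']; simpa using hPP'
  · calc Q' * P' * (P * Q) = Q' * (P' * P) * Q := by noncomm_ring
    _ = 1 := by rw [hP'P]; simpa using hQ'Q

/-- conjugation by the shear `1 + t E_{ij}`. -/
lemma shear_conj (i j : m) (hij : i ≠ j) (t : F) (X : Matrix m m F) :
    ∃ Y : Matrix m m F, SimTo X Y ∧
      Y i i = X i i - t * X j i ∧
      Y j j = X j j + t * X j i ∧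
      (∀ a, a ≠ i → a ≠ j → Y a a = X a a) ∧
      Y i j = X i j + t * (X i i - X j j) - t * t * X j i := by
  have hEE : (single i j 1 : Matrix m m F) * single i j 1 = 0 :=
    single_mul_single_of_ne 1 i j i (Ne.symm hij) 1
  set T : Matrix m m F := t • single i j 1 with hT
  have hTT : T * T = 0 := by
    rw [hT, smul_mul_assoc, mul_smul_comm, hEE, smul_zero, smul_zero]
  refine ⟨(1 - T) * X * (1 + T), ⟨1 + T, 1 - T, ?_, ?_, rfl⟩, ?_, ?_, ?_, ?_⟩
  · have h : (1 + T) * (1 - T) = 1 - T * T := by noncomm_ring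
    rw [h, hTT, sub_zero]
  · have h : (1 - T) * (1 + T) = 1 - T * T := by noncomm_ring
    rw [h, hTT, sub_zero]
  all_goals
    rw [show (1 - T) * X * (1 + T) = X + X * T - T * X - T * (X * T) from by noncomm_ring, hT]
  · simp [smul_mul_assoc, mul_smul_comm, hij, Ne.symm hij]
  · simp [smul_mul_assoc, mul_smul_comm, hij, Ne.symm hij, mul_comm]
  · intro a hai haj
    simp [smul_mul_assoc, mul_smul_comm, hai, haj]
  · simp [smul_mul_assoc, mul_smul_comm, hij, Ne.symm hij]
    ring

/-- kill a diagonal entry using a shear, given a nonzero off-diagonal entry. -/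
lemma kill_diag (i j : m) (hij : i ≠ j) (X : Matrix m m F) (h : X j i ≠ 0) :
    ∃ Y : Matrix m m F, SimTo X Y ∧ Y i i = 0 := by
  obtain ⟨Y, hXY, h1, -, -, -⟩ := shear_conj i j hij (X i i / X j i) X
  exact ⟨Y, hXY, by rw [h1, div_mul_cancel₀ _ h, sub_self]⟩

/-- conjugation by a permutation matrix. -/
lemma perm_conj (σ : Equiv.Perm m) (X : Matrix m m F) :
    SimTo X (X.submatrix σ σ) := by
  refine ⟨σ.symm.toPEquiv.toMatrix, σ.toPEquiv.toMatrix, ?_, ?_, ?_⟩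
  · rw [← PEquiv.toMatrix_trans, ← Equiv.toPEquiv_trans, Equiv.symm_trans_self,
      Equiv.toPEquiv_refl, PEquiv.toMatrix_refl]
  · rw [← PEquiv.toMatrix_trans, ← Equiv.toPEquiv_trans, Equiv.self_trans_symm,
      Equiv.toPEquiv_refl, PEquiv.toMatrix_refl]
  · rw [PEquiv.toMatrix_toPEquiv_mul, PEquiv.mul_toMatrix_toPEquiv, submatrix_submatrix]
    simp

lemma exists_corner_zero [CharZero F] [Nonempty m] (X : Matrix m m F)
    (hX : Matrix.trace X = 0) (z : m) :
    ∃ Y : Matrix m m F, SimTo X Y ∧ Y z z = 0 := by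
  by_cases hod : ∃ i j, i ≠ j ∧ X i j ≠ 0
  · obtain ⟨i, j, hij, hXij⟩ := hod
    obtain ⟨Y, hXY, hYjj⟩ := kill_diag j i hij.symm X hXij
    refine ⟨Y.submatrix (Equiv.swap z j) (Equiv.swap z j), hXY.trans (perm_conj _ Y), ?_⟩
    simp [Equiv.swap_apply_left, hYjj]
  · push_neg at hod
    by_cases hdiag : ∀ a, X a a = X z z
    · refine ⟨X, SimTo.refl X, ?_⟩
      have h1 : Matrix.trace X = (Fintype.card m : F) * X z z := by
        unfold Matrix.trace Matrix.diag
        rw [Finset.sum_congr rfl (fun a _ => hdiag a), Finset.sum_const]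
        rw [nsmul_eq_mul]
        rfl
      rw [hX] at h1
      have hc : (Fintype.card m : F) ≠ 0 := by
        exact_mod_cast Nat.cast_ne_zero.mpr Fintype.card_ne_zero
      exact ((mul_eq_zero.mp h1.symm).resolve_left hc)
    · push_neg at hdiag
      obtain ⟨a, ha⟩ := hdiag
      have haz : a ≠ z := fun h => ha (h ▸ rfl)
      obtain ⟨Y, hXY, -, -, -, hYaz⟩ := shear_conj a z haz 1 X
      rw [hod a z haz, hod z a haz.symm, one_mul, mul_one, zero_add, mul_zero, sub_zero] at hYaz
      have hYaz' : Y a z ≠ 0 := hYaz ▸ sub_ne_zero_of_ne ha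
      obtain ⟨W, hYW, hWzz⟩ := kill_diag z a haz.symm Y hYaz'
      exact ⟨W, (hXY.trans hYW), hWzz⟩

lemma exists_diag_zero [CharZero F] :
    ∀ (n : ℕ) (X : Matrix (Fin n) (Fin n) F), Matrix.trace X = 0 →
      ∃ Y : Matrix (Fin n) (Fin n) F, SimTo X Y ∧ ∀ i, Y i i = 0 := by
  intro n
  induction n with
  | zero => exact fun X _ => ⟨X, SimTo.refl X, fun i => i.elim0⟩
  | succ n ih =>
    intro X hX
    obtain ⟨Y, hXY, hY0⟩ := exists_corner_zero X hX 0
    have hYtr : Matrix.trace Y = 0 := by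
      obtain ⟨P, P', hPP', hP'P, rfl⟩ := hXY
      rw [Matrix.trace_mul_cycle, hPP', one_mul, hX]
    set e : Fin 1 ⊕ Fin n ≃ Fin (n + 1) := finSumFinEquiv.trans (finCongr (Nat.add_comm 1 n))
      with he
    have he0 : e (Sum.inl 0) = 0 := rfl
    set X' : Matrix (Fin 1 ⊕ Fin n) (Fin 1 ⊕ Fin n) F := Y.submatrix e e with hX'
    have htr' : Matrix.trace X' = Matrix.trace Y :=
      Fintype.sum_equiv e (fun i => Y (e i) (e i)) (fun j => Y j j) (fun i => rfl)
    have hblocks : X' = Matrix.fromBlocks X'.toBlocks₁₁ X'.toBlocks₁₂ X'.toBlocks₂₁ X'.toBlocks₂₂ :=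
      (Matrix.fromBlocks_toBlocks X').symm
    have htrD : Matrix.trace X'.toBlocks₂₂ = 0 := by
      have hsum : Matrix.trace X' =
          (∑ a : Fin 1, X' (Sum.inl a) (Sum.inl a)) + ∑ b : Fin n, X' (Sum.inr b) (Sum.inr b) :=
        Fintype.sum_sum_type _
      have h11' : (∑ a : Fin 1, X' (Sum.inl a) (Sum.inl a)) = 0 := by
        rw [Fin.sum_univ_one]
        show Y (e (Sum.inl 0)) (e (Sum.inl 0)) = 0
        rw [he0]; exact hY0
      rw [htr', hYtr, h11', zero_add] at hsum
      have h22 : Matrix.trace X'.toBlocks₂₂ = ∑ b : Fin n, X' (Sum.inr b) (Sum.inr b) := rfl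
      rw [h22, ← hsum]
    obtain ⟨Z, ⟨Q, Q', hQQ', hQ'Q, hZ⟩, hZdiag⟩ := ih X'.toBlocks₂₂ htrD
    set R : Matrix (Fin 1 ⊕ Fin n) (Fin 1 ⊕ Fin n) F := Matrix.fromBlocks 1 0 0 Q with hR
    set R' : Matrix (Fin 1 ⊕ Fin n) (Fin 1 ⊕ Fin n) F := Matrix.fromBlocks 1 0 0 Q' with hR'
    have hRR' : R * R' = 1 := by
      rw [hR, hR', Matrix.fromBlocks_multiply]
      simp [hQQ', Matrix.fromBlocks_one]
    have hR'R : R' * R = 1 := by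
      rw [hR, hR', Matrix.fromBlocks_multiply]
      simp [hQ'Q, Matrix.fromBlocks_one]
    have hW'diag : ∀ p, (R' * X' * R) p p = 0 := by
      rw [hR, hR', hblocks, Matrix.fromBlocks_multiply, Matrix.fromBlocks_multiply]
      rintro (a | b)
      · have ha : a = 0 := Subsingleton.elim a 0
        subst ha
        simp only [Matrix.fromBlocks_apply₁₁, Matrix.one_mul, Matrix.mul_one, Matrix.zero_mul,
          Matrix.mul_zero, add_zero, zero_add]
        show X' (Sum.inl 0) (Sum.inl 0) = 0
        show Y (e (Sum.inl 0)) (e (Sum.inl 0)) = 0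
        rw [he0]; exact hY0
      · simp only [Matrix.fromBlocks_apply₂₂, Matrix.one_mul, Matrix.mul_one, Matrix.zero_mul,
          Matrix.mul_zero, add_zero, zero_add]
        rw [← hZ]
        exact hZdiag b
    -- transfer back
    refine ⟨(R' * X' * R).submatrix e.symm e.symm,
      hXY.trans ⟨R.submatrix e.symm e.symm, R'.submatrix e.symm e.symm, ?_, ?_, ?_⟩, ?_⟩
    · rw [Matrix.submatrix_mul_equiv, hRR', Matrix.submatrix_one_equiv]
    · rw [Matrix.submatrix_mul_equiv, hR'R, Matrix.submatrix_one_equiv]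
    · have : Y = X'.submatrix e.symm e.symm := by
        rw [hX', Matrix.submatrix_submatrix]
        simp
      rw [this, Matrix.submatrix_mul_equiv, Matrix.submatrix_mul_equiv]
    · intro i
      exact hW'diag (e.symm i)

lemma map_foldr_br {A B : Type} [Ring A] [Ring B] (phi : A →+* B) (l : List A) (z : A) :
    phi (l.foldr br z) = (l.map phi).foldr br (phi z) := by
  induction l with
  | nil => rfl
  | cons x xs ih => simp [br, ih, map_sub, _root_.map_mul]

lemma trace_foldr_br {l : List (Matrix m m F)} (hl : l ≠ []) (z : Matrix m m F) :
    Matrix.trace (l.foldr br z) = 0 := by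
  cases l with
  | nil => exact absurd rfl hl
  | cons x xs =>
    show Matrix.trace (br x (xs.foldr br z)) = 0
    rw [br, Matrix.trace_sub, Matrix.trace_mul_comm, sub_self]

lemma foldr_replicate_diagonal (μ : m → F) (M : Matrix m m F) :
    ∀ r : ℕ, (List.replicate r (Matrix.diagonal μ)).foldr br M =
      Matrix.of fun i j => (μ i - μ j) ^ r * M i j := by
  intro r
  induction r with
  | zero => ext i j; simp
  | succ r ih =>
    show br (Matrix.diagonal μ) ((List.replicate r (Matrix.diagonal μ)).foldr br M) = _
    rw [ih]
    ext i j
    simp only [br, Matrix.sub_apply, Matrix.diagonal_mul, Matrix.mul_diagonal, Matrix.of_apply]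
    ring

lemma foldr_replicate_conj {P P' : Matrix m m F} (h : P' * P = 1) (Δ Γ : Matrix m m F) :
    ∀ r : ℕ, (List.replicate r (P * Δ * P')).foldr br (P * Γ * P') =
      P * ((List.replicate r Δ).foldr br Γ) * P' := by
  have hmul : ∀ A B : Matrix m m F, (P * A * P') * (P * B * P') = P * (A * B) * P' := by
    intro A B
    calc (P * A * P') * (P * B * P') = P * A * (P' * P) * (B * P') := by noncomm_ring
      _ = P * (A * B) * P' := by rw [h]; noncomm_ring
  intro r
  induction r with
  | zero => rfl
  | succ r ih =>
    show br (P * Δ * P') ((List.replicate r (P * Δ * P')).foldr br (P * Γ * P')) = _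
    rw [ih]
    show (P * Δ * P') * (P * _ * P') - (P * _ * P') * (P * Δ * P') = _
    rw [hmul, hmul]
    show _ = P * (br Δ _) * P'
    simp only [br, Matrix.mul_sub, Matrix.sub_mul]


/-- With the variables of `F⟨x_1, …, x_d⟩` indexed by `Fin d` (so `x_1` is the variable of
index `0` and `x_2, …, x_d` are the variables of nonzero index), the right-normed Lie
monomial `[x_{i_1}, x_{i_2}, …, x_{i_{k-1}}, x_1]` with `i_1, …, i_{k-1} ∈ {2, …, d}`
has image `M_n^0(F)`, the trace-zero matrices. -/
theorem rightNormed_lie_monomial_image (F : Type) [Field F] [IsAlgClosed F] [CharZero F]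
    (n d k : ℕ) (hn : 2 ≤ n) (hd : 2 ≤ d) (hk : 2 ≤ k)
    (idx : Fin (k - 1) → Fin d) (hidx : ∀ t, idx t ≠ ⟨0, by omega⟩) :
    ncImage n ((List.ofFn fun t : Fin (k - 1) => FreeAlgebra.ι F (idx t)).foldr br
        (FreeAlgebra.ι F ⟨0, by omega⟩)) =
      {X : Matrix (Fin n) (Fin n) F | Matrix.trace X = 0} := by
  have hd0 : 0 < d := by omega
  ext X
  simp only [Set.mem_setOf_eq, ncImage, Set.mem_range]
  constructor
  · rintro ⟨a, rfl⟩
    have h1 : ncEval ((List.ofFn fun t : Fin (k - 1) => FreeAlgebra.ι F (idx t)).foldr br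
          (FreeAlgebra.ι F ⟨0, hd0⟩)) a
        = ((List.ofFn fun t : Fin (k - 1) => FreeAlgebra.ι F (idx t)).map
            (FreeAlgebra.lift F a)).foldr br ((FreeAlgebra.lift F a) (FreeAlgebra.ι F ⟨0, hd0⟩)) :=
      map_foldr_br (FreeAlgebra.lift F a).toRingHom _ _
    rw [h1]
    apply trace_foldr_br
    intro hnil
    apply_fun List.length at hnil
    simp at hnil
    omega
  · intro hX
    obtain ⟨Y, ⟨P, P', hPP', hP'P, hYdef⟩, hYdiag⟩ := exists_diag_zero n X hX
    have hXPY : X = P * Y * P' := by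
      rw [hYdef]
      calc X = (P * P') * X * (P * P') := by rw [hPP']; simp
        _ = P * (P' * X * P) * P' := by noncomm_ring
    set μ : Fin n → F := fun i => ((i : ℕ) : F) with hμ
    have hμnz : ∀ i j : Fin n, i ≠ j → μ i - μ j ≠ 0 := fun i j hij =>
      sub_ne_zero_of_ne (fun hc => hij (Fin.val_injective (Nat.cast_injective hc)))
    set Γ : Matrix (Fin n) (Fin n) F :=
      Matrix.of (fun i j => if i = j then 0 else Y i j / (μ i - μ j) ^ (k - 1)) with hΓ
    set a : Fin d → Matrix (Fin n) (Fin n) F :=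
      fun s => if s = ⟨0, hd0⟩ then P * Γ * P' else P * Matrix.diagonal μ * P' with ha
    refine ⟨a, ?_⟩
    have h1 : ncEval ((List.ofFn fun t : Fin (k - 1) => FreeAlgebra.ι F (idx t)).foldr br
          (FreeAlgebra.ι F ⟨0, hd0⟩)) a
        = ((List.ofFn fun t : Fin (k - 1) => FreeAlgebra.ι F (idx t)).map
            (FreeAlgebra.lift F a)).foldr br ((FreeAlgebra.lift F a) (FreeAlgebra.ι F ⟨0, hd0⟩)) :=
      map_foldr_br (FreeAlgebra.lift F a).toRingHom _ _
    rw [h1, FreeAlgebra.lift_ι_apply, List.map_ofFn]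
    have hmapeq : (List.ofFn ((FreeAlgebra.lift F a) ∘ fun t : Fin (k - 1) =>
          FreeAlgebra.ι F (idx t))) = List.replicate (k - 1) (P * Matrix.diagonal μ * P') := by
      have hfn : ((FreeAlgebra.lift F a) ∘ fun t : Fin (k - 1) => FreeAlgebra.ι F (idx t))
          = fun _ : Fin (k - 1) => P * Matrix.diagonal μ * P' := by
        funext t
        simp only [Function.comp_apply, FreeAlgebra.lift_ι_apply]
        rw [ha]
        exact if_neg (hidx t)
      rw [hfn, List.ofFn_const]
    have hastart : a ⟨0, hd0⟩ = P * Γ * P' := if_pos rfl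
    rw [hmapeq, hastart, foldr_replicate_conj hP'P, foldr_replicate_diagonal]
    have hinner : (Matrix.of fun i j => (μ i - μ j) ^ (k - 1) * Γ i j) = Y := by
      ext i j
      by_cases hij : i = j
      · subst hij
        simp [hΓ, hYdiag i]
      · simp only [Matrix.of_apply, hΓ, if_neg hij]
        rw [mul_comm, div_mul_cancel₀]
        exact pow_ne_zero _ (hμnz i j hij)
    rw [hinner, ← hXPY]
end

section
/- Let F be an algebraically closed field of characteristic zero, n ≥ 2, and let α, β ∈ F be not both zero. Let f ∈ F⟨x_1,x_2,x_3⟩ be f(x_1,x_2,x_3) = α·[x_3,[x_2,x_1]] + β·[x_2,[x_3,x_1]], where [a,b] = ab − ba. Then the image of f on M_n(F) equals M_n^0(F), the set of all trace-zero matrices in M_n(F). -/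
open Matrix

open Module Submodule

set_option linter.unusedSectionVars false

section Scalar
variable {F : Type} [Field F]

theorem aux_scalar {V : Type} [AddCommGroup V] [Module F V] (φ : Module.End F V)
    (h : ∀ v : V, ∃ c : F, φ v = c • v) : ∃ c : F, ∀ v, φ v = c • v := by
  by_cases hV : ∀ v : V, v = 0
  · exact ⟨0, fun v => by rw [hV v]; simp⟩
  push_neg at hV
  obtain ⟨v₀, hv₀⟩ := hV
  obtain ⟨c₀, hc₀⟩ := h v₀
  refine ⟨c₀, fun w => ?_⟩
  by_cases hw : ∃ a : F, w = a • v₀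
  · obtain ⟨a, rfl⟩ := hw
    rw [LinearMap.map_smul, hc₀, smul_comm]
  · obtain ⟨cw, hcw⟩ := h w
    obtain ⟨c', hc'⟩ := h (v₀ + w)
    rw [map_add, hc₀, hcw, smul_add] at hc'
    have key : (c₀ - c') • v₀ = (c' - cw) • w := by
      rw [sub_smul, sub_smul]
      linear_combination (norm := module) hc'
    have hccw : c' = cw := by
      by_contra hne
      have h2 : c' - cw ≠ 0 := sub_ne_zero.mpr hne
      refine hw ⟨(c₀ - c') / (c' - cw), ?_⟩
      rw [div_eq_inv_mul, mul_smul, key, inv_smul_smul₀ h2]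
    have hc0c : c₀ = c' := by
      have h0 : (c₀ - c') • v₀ = 0 := by rw [key, hccw]; simp
      rcases smul_eq_zero.mp h0 with h1 | h1
      · exact sub_eq_zero.mp h1
      · exact absurd h1 hv₀
    rw [hcw, hc0c, hccw]
end Scalar


section Compl
variable {F : Type} [Field F] {V : Type} [AddCommGroup V] [Module F V]
variable {p q : Submodule F V} (h : IsCompl p q)
variable {ι κ : Type} (bp : Basis ι F p) (bq : Basis κ F q)

noncomputable def complBasis : Basis (ι ⊕ κ) F V :=
  (bp.prod bq).map (Submodule.prodEquivOfIsCompl p q h)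

theorem complBasis_inl (i : ι) : complBasis h bp bq (Sum.inl i) = (bp i : V) := by
  rw [complBasis, Basis.map_apply]
  have h1 : (bp.prod bq) (Sum.inl i) = ((bp i : p), (0 : q)) := by
    exact Prod.ext (Basis.prod_apply_inl_fst bp bq i) (Basis.prod_apply_inl_snd bp bq i)
  rw [h1, Submodule.coe_prodEquivOfIsCompl']
  simp

theorem complBasis_inr (j : κ) : complBasis h bp bq (Sum.inr j) = (bq j : V) := by
  rw [complBasis, Basis.map_apply]
  have h1 : (bp.prod bq) (Sum.inr j) = ((0 : p), (bq j : q)) := by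
    exact Prod.ext (Basis.prod_apply_inr_fst bp bq j) (Basis.prod_apply_inr_snd bp bq j)
  rw [h1, Submodule.coe_prodEquivOfIsCompl']
  simp

theorem prodEquiv_symm (x : V) :
    (Submodule.prodEquivOfIsCompl p q h).symm x =
      (p.linearProjOfIsCompl q h x, q.linearProjOfIsCompl p h.symm x) := by
  rw [LinearEquiv.symm_apply_eq, Submodule.coe_prodEquivOfIsCompl']
  exact (Submodule.projection_add_projection_eq_self h x).symm

theorem complBasis_repr_inl (x : V) (i : ι) :
    (complBasis h bp bq).repr x (Sum.inl i) =
      bp.repr (p.linearProjOfIsCompl q h x) i := by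
  rw [complBasis, Basis.map_repr]
  simp only [LinearEquiv.trans_apply]
  rw [prodEquiv_symm h x, Basis.prod_repr_inl]

theorem complBasis_repr_inr (x : V) (j : κ) :
    (complBasis h bp bq).repr x (Sum.inr j) =
      bq.repr (q.linearProjOfIsCompl p h.symm x) j := by
  rw [complBasis, Basis.map_repr]
  simp only [LinearEquiv.trans_apply]
  rw [prodEquiv_symm h x, Basis.prod_repr_inr]

end Compl


section Induction
variable {F : Type} [Field F] [CharZero F]

/-- trace of an endomorphism as sum of diagonal entries wrt a basis -/
theorem trace_eq_sum_diag {V : Type} [AddCommGroup V] [Module F V]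
    {ι : Type} [Fintype ι] [DecidableEq ι] (b : Basis ι F V) (φ : Module.End F V) :
    LinearMap.trace F V φ = ∑ i, b.repr (φ (b i)) i := by
  rw [LinearMap.trace_eq_matrix_trace F b φ, Matrix.trace]
  congr 1
  ext i
  rw [Matrix.diag, LinearMap.toMatrix_apply]

theorem exists_basis_diag_zero (n : ℕ) :
    ∀ (V : Type) [AddCommGroup V] [Module F V] [FiniteDimensional F V],
      finrank F V = n → ∀ φ : Module.End F V, LinearMap.trace F V φ = 0 →
      ∃ b : Basis (Fin n) F V, ∀ i, b.repr (φ (b i)) i = 0 := by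
  induction n with
  | zero =>
    intro V _ _ _ hdim φ _
    exact ⟨(Module.finBasis F V).reindex (finCongr hdim), fun i => i.elim0⟩
  | succ n ih =>
    intro V _ _ _ hdim φ htr
    by_cases hsc : ∀ v : V, ∃ c : F, φ v = c • v
    · obtain ⟨c, hc⟩ := aux_scalar φ hsc
      have hφ : φ = c • (LinearMap.id : V →ₗ[F] V) := by
        ext v; simpa using hc v
      rw [hφ] at htr
      rw [LinearMap.map_smul, LinearMap.trace_id, hdim] at htr
      have hc0 : c = 0 := by
        have : ((n : F) + 1) ≠ 0 := by
          have := Nat.cast_add_one_ne_zero (R := F) n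
          simpa using this
        have h2 : c * ((n:F)+1) = 0 := by
          rw [smul_eq_mul] at htr; push_cast at htr; linear_combination htr
        rcases mul_eq_zero.mp h2 with h3 | h3
        · exact h3
        · exact absurd h3 this
      refine ⟨(Module.finBasis F V).reindex (finCongr hdim), fun i => ?_⟩
      rw [hφ, hc0]
      simp
    · push_neg at hsc
      obtain ⟨v, hv⟩ := hsc
      have hv0 : v ≠ 0 := by
        intro hz
        exact hv 0 (by rw [hz]; simp)
      set u := φ v with hu_def
      set L : Submodule F V := F ∙ v with hL
      have huL : u ∉ L := by
        intro hmem
        rw [hL, Submodule.mem_span_singleton] at hmem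
        obtain ⟨a, ha⟩ := hmem
        exact hv a ha.symm
      set U : Submodule F V := F ∙ u with hU
      have hLU : L ⊓ U = ⊥ := by
        rw [eq_bot_iff]
        intro x hx
        rw [Submodule.mem_inf] at hx
        obtain ⟨hxL, hxU⟩ := hx
        rw [hU, Submodule.mem_span_singleton] at hxU
        obtain ⟨b, rfl⟩ := hxU
        rcases eq_or_ne b 0 with hb | hb
        · simp [hb]
        · exfalso
          apply huL
          have : u = b⁻¹ • (b • u) := by rw [smul_smul, inv_mul_cancel₀ hb, one_smul]
          rw [this]
          exact Submodule.smul_mem _ _ hxL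
      obtain ⟨W₀, hW₀⟩ := Submodule.exists_isCompl (L ⊔ U)
      set W : Submodule F V := U ⊔ W₀ with hW
      have hcompl : IsCompl L W := by
        constructor
        · rw [disjoint_iff, eq_bot_iff]
          rintro x ⟨hxL, hxW⟩
          rw [hW] at hxW
          obtain ⟨y, hy, z, hz, rfl⟩ := Submodule.mem_sup.mp hxW
          have hzmem : z ∈ (L ⊔ U) ⊓ W₀ := by
            constructor
            · have h1 : (y + z) - y ∈ L ⊔ U := by
                apply Submodule.sub_mem
                · exact Submodule.mem_sup_left hxL
                · exact Submodule.mem_sup_right hy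
              simpa using h1
            · exact hz
          have hz0 : z = 0 := by
            have := hW₀.disjoint
            rw [disjoint_iff] at this
            rw [this] at hzmem
            simpa using hzmem
          subst hz0
          have : y + 0 ∈ L ⊓ U := ⟨by simpa using hxL, by simpa using hy⟩
          rw [hLU] at this
          simpa using this
        · rw [codisjoint_iff, hW, ← sup_assoc]
          exact codisjoint_iff.mp hW₀.codisjoint
      have huW : u ∈ W := by
        rw [hW]
        exact Submodule.mem_sup_left (Submodule.mem_span_singleton_self u)
      -- φ maps L into W
      have hφL : ∀ x ∈ L, φ x ∈ W := by
        intro x hx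
        rw [hL, Submodule.mem_span_singleton] at hx
        obtain ⟨a, rfl⟩ := hx
        rw [LinearMap.map_smul]
        exact Submodule.smul_mem _ _ huW
      -- dimensions
      have hdimL : finrank F L = 1 := finrank_span_singleton hv0
      have hdimW : finrank F W = n := by
        have hsum := Submodule.finrank_add_eq_of_isCompl hcompl
        rw [hdimL, hdim] at hsum
        omega
      -- bases
      set bL : Basis (Fin 1) F L := (Module.finBasis F L).reindex (finCongr hdimL) with hbL
      set bq₀ : Basis (Fin n) F W := (Module.finBasis F W).reindex (finCongr hdimW) with hbq₀
      set projL := L.linearProjOfIsCompl W hcompl with hprojL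
      set projW := W.linearProjOfIsCompl L hcompl.symm with hprojW
      set ψ : Module.End F W := projW ∘ₗ φ ∘ₗ W.subtype with hψ
      have hprojLW : ∀ x ∈ W, projL x = 0 := fun x hx =>
        Submodule.projectionOnto_apply_of_mem_right hcompl hx
      -- trace of ψ is zero
      have hdiagL : ∀ (i : Fin 1), bL.repr (projL (φ (bL i))) i = 0 := by
        intro i
        have : projL (φ (bL i)) = 0 := hprojLW _ (hφL _ (bL i).2)
        rw [this]
        simp
      have htrψ : LinearMap.trace F W ψ = 0 := by
        have hb₀ := trace_eq_sum_diag (complBasis hcompl bL bq₀) φ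
        rw [htr] at hb₀
        rw [Fintype.sum_sum_type] at hb₀
        have e1 : ∀ i : Fin 1,
            (complBasis hcompl bL bq₀).repr (φ (complBasis hcompl bL bq₀ (Sum.inl i)))
              (Sum.inl i) = 0 := by
          intro i
          rw [complBasis_repr_inl, complBasis_inl]
          exact hdiagL i
        have e2 : ∀ j : Fin n,
            (complBasis hcompl bL bq₀).repr (φ (complBasis hcompl bL bq₀ (Sum.inr j)))
              (Sum.inr j) = bq₀.repr (ψ (bq₀ j)) j := by
          intro j
          rw [complBasis_repr_inr, complBasis_inr]
          rfl
        rw [Finset.sum_congr rfl (fun i _ => e1 i), Finset.sum_congr rfl (fun j _ => e2 j)] at hb₀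
        rw [trace_eq_sum_diag bq₀ ψ]
        simpa using hb₀.symm
      obtain ⟨bc, hbc⟩ := ih W hdimW ψ htrψ
      -- final basis
      set e2 : (Fin 1 ⊕ Fin n) ≃ Fin (n + 1) :=
        finSumFinEquiv.trans (finCongr (Nat.add_comm 1 n)) with he2
      refine ⟨(complBasis hcompl bL bc).reindex e2, fun i => ?_⟩
      rw [Basis.repr_reindex_apply, Basis.reindex_apply]
      cases h1 : e2.symm i with
      | inl a =>
        rw [complBasis_repr_inl, complBasis_inl]
        exact hdiagL a
      | inr a =>
        rw [complBasis_repr_inr, complBasis_inr]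
        exact hbc a
end Induction


theorem exists_conj_diag_zero {F : Type} [Field F] [CharZero F] {n : ℕ}
    (X : Matrix (Fin n) (Fin n) F) (hX : Matrix.trace X = 0) :
    ∃ (g : (Matrix (Fin n) (Fin n) F)ˣ) (Z : Matrix (Fin n) (Fin n) F),
      (∀ i, Z i i = 0) ∧ X = (g : Matrix (Fin n) (Fin n) F) * Z * ((g⁻¹ : (Matrix (Fin n) (Fin n) F)ˣ) : Matrix (Fin n) (Fin n) F) := by
  set std := Pi.basisFun F (Fin n) with hstd
  set φ := Matrix.toLin std std X with hφ
  have htr : LinearMap.trace F (Fin n → F) φ = 0 := by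
    rw [LinearMap.trace_eq_matrix_trace F std φ, hφ, LinearMap.toMatrix_toLin]
    exact hX
  obtain ⟨b, hb⟩ := exists_basis_diag_zero n (Fin n → F)
    (by simp [finrank_pi]) φ htr
  set Z := LinearMap.toMatrix b b φ with hZ
  have hZdiag : ∀ i, Z i i = 0 := by
    intro i
    rw [hZ, LinearMap.toMatrix_apply]
    exact hb i
  have key : std.toMatrix b * Z * b.toMatrix std = X := by
    rw [hZ, basis_toMatrix_mul_linearMap_toMatrix_mul_basis_toMatrix, hφ,
      LinearMap.toMatrix_toLin]
  have h1 : std.toMatrix b * b.toMatrix std = 1 := Basis.toMatrix_mul_toMatrix_flip std b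
  have h2 : b.toMatrix std * std.toMatrix b = 1 := Basis.toMatrix_mul_toMatrix_flip b std
  refine ⟨⟨std.toMatrix b, b.toMatrix std, h1, h2⟩, Z, hZdiag, ?_⟩
  exact key.symm


section Mats
variable {F : Type} [Field F] {n : ℕ}

theorem br_jacobi {A : Type} [Ring A] (a b c : A) :
    br c (br b a) - br b (br c a) = br (br c b) a := by
  simp only [br]; noncomm_ring

theorem br_smul_right {A : Type} [Ring A] {F : Type} [CommSemiring F] [Algebra F A]
    (c : F) (P Q : A) : br P (c • Q) = c • br P Q := by
  simp only [br, mul_smul_comm, smul_mul_assoc, smul_sub]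

theorem myconj_mul {A : Type} [Ring A] {G G' : A} (h : G' * G = 1) (P Q : A) :
    (G * P * G') * (G * Q * G') = G * (P * Q) * G' := by
  have key : (G * P * G') * (G * Q * G') = G * P * (G' * G) * (Q * G') := by noncomm_ring
  rw [key, h, mul_one]
  noncomm_ring

theorem myconj_br {A : Type} [Ring A] {G G' : A} (h : G' * G = 1) (P Q : A) :
    br (G * P * G') (G * Q * G') = G * (br P Q) * G' := by
  simp only [br, myconj_mul h]
  noncomm_ring

noncomputable def dd (n : ℕ) (F : Type) [Field F] : Fin n → F :=
  fun i => ((i : ℕ) : F) - ((n : F) - 1) / 2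

noncomputable def ss (n : ℕ) (F : Type) [Field F] : Fin n → F :=
  fun j => (((j : ℕ) : F) + 1) * (((j : ℕ) : F) - ((n : F) - 1)) / 2

theorem dd_inj [CharZero F] {i j : Fin n} (hij : i ≠ j) : dd n F i ≠ dd n F j := by
  intro h
  have h2 : ((i : ℕ) : F) = ((j : ℕ) : F) := by
    have := h
    simp only [dd, sub_left_inj] at this
    exact this
  exact hij (Fin.ext (Nat.cast_injective h2))

theorem ss_zero [CharZero F] {i : Fin n} (h : (i : ℕ) = 0) : ss n F i = dd n F i := by
  simp only [ss, dd, h]; push_cast; ring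

theorem ss_succ [CharZero F] {m i : Fin n} (h : (m : ℕ) + 1 = (i : ℕ)) :
    ss n F i - ss n F m = dd n F i := by
  have hc : ((i : ℕ) : F) = ((m : ℕ) : F) + 1 := by
    have := congrArg (Nat.cast : ℕ → F) h
    push_cast at this
    exact this.symm
  have h2 : (2 : F) ≠ 0 := two_ne_zero
  simp only [ss, dd, hc]
  field_simp
  ring

theorem ss_last [CharZero F] {i : Fin n} (h : (i : ℕ) + 1 = n) : ss n F i = 0 := by
  have hc : ((n : F)) = ((i : ℕ) : F) + 1 := by
    have := congrArg (Nat.cast : ℕ → F) h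
    push_cast at this
    exact this.symm
  have hz : ((i : ℕ) : F) - ((n : F) - 1) = 0 := by rw [hc]; ring
  simp only [ss, hz, mul_zero, zero_div]

noncomputable def NN (n : ℕ) (F : Type) [Field F] : Matrix (Fin n) (Fin n) F :=
  Matrix.of fun i j => if (i : ℕ) + 1 = (j : ℕ) then 1 else 0

noncomputable def BB (n : ℕ) (F : Type) [Field F] : Matrix (Fin n) (Fin n) F :=
  Matrix.of fun i j => if (i : ℕ) = (j : ℕ) + 1 then ss n F j else 0

theorem NB_apply (i j : Fin n) :
    (NN n F * BB n F) i j = if i = j ∧ (i : ℕ) + 1 < n then ss n F j else 0 := by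
  rw [Matrix.mul_apply]
  by_cases hi : (i : ℕ) + 1 < n
  · rw [Finset.sum_eq_single (⟨(i : ℕ) + 1, hi⟩ : Fin n)]
    · simp only [NN, BB, Matrix.of_apply]
      by_cases hij : i = j
      · subst hij; simp [hi]
      · have h2 : ¬ ((i : ℕ) + 1 = (j : ℕ) + 1) := by
          intro h; exact hij (Fin.ext (Nat.succ_injective h))
        simp [h2, hij]
        exact fun h => absurd (Fin.ext h) hij
    · intro k _ hk
      have h2 : ¬ ((i : ℕ) + 1 = (k : ℕ)) := by
        intro h; exact hk (Fin.ext h.symm)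
      simp [NN, h2]
    · intro h; exact absurd (Finset.mem_univ _) h
  · rw [Finset.sum_eq_zero]
    · simp [hi]
    · intro k _
      have h2 : ¬ ((i : ℕ) + 1 = (k : ℕ)) := by
        intro h; exact hi (h ▸ k.isLt)
      simp [NN, h2]

theorem BN_apply_zero {i : Fin n} (hi : (i : ℕ) = 0) (j : Fin n) :
    (BB n F * NN n F) i j = 0 := by
  rw [Matrix.mul_apply, Finset.sum_eq_zero]
  intro k _
  have h2 : ¬ ((i : ℕ) = (k : ℕ) + 1) := by omega
  simp [BB, h2]

theorem BN_apply_succ {m i : Fin n} (hm : (m : ℕ) + 1 = (i : ℕ)) (j : Fin n) :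
    (BB n F * NN n F) i j = if i = j then ss n F m else 0 := by
  rw [Matrix.mul_apply, Finset.sum_eq_single m]
  · simp only [BB, NN, Matrix.of_apply]
    by_cases hij : i = j
    · subst hij
      rw [if_pos hm.symm, if_pos hm, if_pos rfl, mul_one]
    · have h2 : ¬ ((m : ℕ) + 1 = (j : ℕ)) := by
        intro h; exact hij (Fin.ext (by omega))
      simp [h2, hij]
  · intro k _ hk
    have h2 : ¬ ((i : ℕ) = (k : ℕ) + 1) := by
      intro h; exact hk (Fin.ext (by omega))
    simp [BB, h2]
  · intro h; exact absurd (Finset.mem_univ _) h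

theorem br_NN_BB [CharZero F] (hn : 2 ≤ n) : br (NN n F) (BB n F) = Matrix.diagonal (dd n F) := by
  ext i j
  rw [br, Matrix.sub_apply, NB_apply]
  rcases Nat.eq_zero_or_pos (i : ℕ) with hi0 | hipos
  · rw [BN_apply_zero hi0]
    by_cases hij : i = j
    · subst hij
      have h1 : (i : ℕ) + 1 < n := by omega
      rw [if_pos ⟨rfl, h1⟩, sub_zero, Matrix.diagonal_apply_eq]
      exact ss_zero hi0
    · rw [if_neg (fun h => hij h.1), sub_zero, Matrix.diagonal_apply_ne _ hij]
  · have hmlt : (i : ℕ) - 1 < n := by omega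
    set m : Fin n := ⟨(i : ℕ) - 1, hmlt⟩ with hm_def
    have hm : (m : ℕ) + 1 = (i : ℕ) := by
      simp only [hm_def]
      omega
    rw [BN_apply_succ hm]
    by_cases hij : i = j
    · subst hij
      rw [if_pos rfl, Matrix.diagonal_apply_eq]
      by_cases hlast : (i : ℕ) + 1 < n
      · rw [if_pos ⟨rfl, hlast⟩]
        exact ss_succ hm
      · have hlast' : (i : ℕ) + 1 = n := by omega
        rw [if_neg (fun h => hlast h.2)]
        rw [← ss_succ (F := F) hm, ss_last hlast']
    · rw [if_neg (fun h => hij h.1), if_neg hij, sub_zero, Matrix.diagonal_apply_ne _ hij]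
end Mats



/-- In `F⟨x_1, x_2, x_3⟩` the variables `x_1, x_2, x_3` are indexed by `0, 1, 2 : Fin 3`.
A general nonzero multilinear Lie polynomial of degree 3,
`f = α [x_3, [x_2, x_1]] + β [x_2, [x_3, x_1]]`, has image `M_n^0(F)`. -/
theorem multilinear_lie_deg3_image (F : Type) [Field F] [IsAlgClosed F] [CharZero F]
    (n : ℕ) (hn : 2 ≤ n) (α β : F) (hαβ : ¬ (α = 0 ∧ β = 0)) :
    ncImage n
        (α • br (FreeAlgebra.ι F (2 : Fin 3))
              (br (FreeAlgebra.ι F (1 : Fin 3)) (FreeAlgebra.ι F (0 : Fin 3))) +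
         β • br (FreeAlgebra.ι F (1 : Fin 3))
              (br (FreeAlgebra.ι F (2 : Fin 3)) (FreeAlgebra.ι F (0 : Fin 3)))) =
      {X : Matrix (Fin n) (Fin n) F | Matrix.trace X = 0} := by
  have heval : ∀ a : Fin 3 → Matrix (Fin n) (Fin n) F,
      ncEval (α • br (FreeAlgebra.ι F (2 : Fin 3))
              (br (FreeAlgebra.ι F (1 : Fin 3)) (FreeAlgebra.ι F (0 : Fin 3))) +
         β • br (FreeAlgebra.ι F (1 : Fin 3))
              (br (FreeAlgebra.ι F (2 : Fin 3)) (FreeAlgebra.ι F (0 : Fin 3)))) a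
        = α • br (a 2) (br (a 1) (a 0)) + β • br (a 1) (br (a 2) (a 0)) := by
    intro a
    simp [ncEval, br, map_add, map_sub, _root_.map_mul, _root_.map_smul, FreeAlgebra.lift_ι_apply]
  ext X
  simp only [ncImage, Set.mem_range, Set.mem_setOf_eq]
  constructor
  · rintro ⟨a, rfl⟩
    rw [heval]
    have tr_br : ∀ P Q : Matrix (Fin n) (Fin n) F, Matrix.trace (br P Q) = 0 := by
      intro P Q
      rw [br, Matrix.trace_sub, Matrix.trace_mul_comm, sub_self]
    rw [Matrix.trace_add, Matrix.trace_smul, Matrix.trace_smul, tr_br, tr_br]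
    simp
  · intro hX
    obtain ⟨g, Z, hZdiag, hXeq⟩ := exists_conj_diag_zero X hX
    set G : Matrix (Fin n) (Fin n) F := (g : Matrix (Fin n) (Fin n) F) with hG
    set G' : Matrix (Fin n) (Fin n) F :=
      ((g⁻¹ : (Matrix (Fin n) (Fin n) F)ˣ) : Matrix (Fin n) (Fin n) F) with hG'
    have hG'G : G' * G = 1 := by rw [hG, hG']; exact_mod_cast g.inv_mul
    set d : Fin n → F := dd n F with hd
    set D : Matrix (Fin n) (Fin n) F := Matrix.diagonal d with hD
    have br_diag : ∀ (P : Matrix (Fin n) (Fin n) F) (i j : Fin n),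
        br D P i j = (d i - d j) * P i j := by
      intro P i j
      rw [br, Matrix.sub_apply, Matrix.diagonal_mul, Matrix.mul_diagonal]
      ring
    rcases eq_or_ne (α + β) 0 with hγ | hγ
    · -- case α + β = 0 : f = α [[x₃,x₂],x₁]
      have hα : α ≠ 0 := by
        rintro rfl
        exact hαβ ⟨rfl, by linear_combination hγ⟩
      have hβ : β = -α := by linear_combination hγ
      set Y : Matrix (Fin n) (Fin n) F :=
        Matrix.of fun i j => Z i j / (d i - d j) with hY
      have hDY : br D Y = Z := by
        ext i j
        rw [br_diag]
        rcases eq_or_ne i j with rfl | hij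
        · simp [hY, hZdiag i]
        · have hdij : d i - d j ≠ 0 := sub_ne_zero.mpr (dd_inj hij)
          rw [hY]
          simp only [Matrix.of_apply]
          field_simp
      refine ⟨![α⁻¹ • (G * Y * G'), G * BB n F * G', G * NN n F * G'], ?_⟩
      rw [heval]
      simp only [Matrix.cons_val_zero, Matrix.cons_val_one, Matrix.head_cons,
        Matrix.cons_val_two, Matrix.tail_cons]
      rw [hβ, neg_smul, ← sub_eq_add_neg, ← smul_sub, br_jacobi,
        myconj_br hG'G, br_NN_BB hn, ← hD, br_smul_right, myconj_br hG'G, hDY,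
        smul_smul, mul_inv_cancel₀ hα, one_smul]
      exact hXeq.symm
    · -- case α + β ≠ 0
      set Y : Matrix (Fin n) (Fin n) F :=
        Matrix.of fun i j => Z i j / ((α + β) * (d i - d j) ^ 2) with hY
      have hDDY : (α + β) • br D (br D Y) = Z := by
        ext i j
        rw [Matrix.smul_apply, br_diag, br_diag]
        rcases eq_or_ne i j with rfl | hij
        · simp [hY, hZdiag i]
        · have hdij : d i - d j ≠ 0 := sub_ne_zero.mpr (dd_inj hij)
          rw [hY]
          simp only [Matrix.of_apply, smul_eq_mul]
          field_simp
      refine ⟨![G * Y * G', G * D * G', G * D * G'], ?_⟩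
      rw [heval]
      simp only [Matrix.cons_val_zero, Matrix.cons_val_one, Matrix.head_cons,
        Matrix.cons_val_two, Matrix.tail_cons]
      rw [myconj_br hG'G, myconj_br hG'G]
      rw [show ∀ P : Matrix (Fin n) (Fin n) F,
          α • (G * P * G') + β • (G * P * G') = G * ((α + β) • P) * G' from ?_]
      · rw [hDDY]; exact hXeq.symm
      · intro P
        simp only [add_smul, Matrix.mul_add, Matrix.add_mul, Matrix.mul_smul, Matrix.smul_mul]
end
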